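/- Let n ≥ 3 be an odd natural number, k ∈ ℕ with 1 ≤ k ≤ (n−1)/2, and r ∈ ℝ with |r| < (n+3)/2 and 2r ∉ {±(n − 2k + 1)}. Suppose f, g : ℕ → ℝ satisfy: g(0) = 1; g(j+1) · (n/2 + 1 + j + 1/2 − r) = (n/2 + 1 + j + 1/2 + r) · g(j) for all j; f(j+1) · (n/2 + 1 + j + 1/2 − r) = (n/2 + 1 + j + 1/2 + r) · f(j) for all j; and g(j) · (n/2 − k + 1/2 − r) = (n/2 − k + 1/2 + r) · f(j) for all j. Then g(j) = Z₁(r, j, 1) and f(j) = Z₁(r, j, 0) for all j ∈ ℕ, where Z₁ denotes the spectral functions with ε = 1. -/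

import Mathlib

/-- Case II spectral function on the summands `𝒱_ε(j, 1)` of the bundle `𝕋ᵏ` over the
odd sphere `Sⁿ`, with `L = n/2 + 1 + j`. -/
noncomputable def Zspec1 (n : ℕ) (ε r : ℝ) (j : ℕ) : ℝ :=
  ε * (Real.Gamma ((n : ℝ) / 2 + 1 + j + 1 / 2 + r) * Real.Gamma ((n : ℝ) / 2 + 3 / 2 - r)) /
    (Real.Gamma ((n : ℝ) / 2 + 1 + j + 1 / 2 - r) * Real.Gamma ((n : ℝ) / 2 + 3 / 2 + r))

/-- Case II spectral function on the summands `𝒱_ε(j, 0)`. -/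
noncomputable def Zspec0 (n k : ℕ) (ε r : ℝ) (j : ℕ) : ℝ :=
  (((n : ℝ) - 2 * k + 1 - 2 * r) / ((n : ℝ) - 2 * k + 1 + 2 * r)) * Zspec1 n ε r j

/-- Uniqueness, up to normalization, of the joint solution of the spectrum generating
recursion relations on the two families of isotypic summands of `𝕋ᵏ` over `Sⁿ`. -/
theorem Zspec_case2_unique (n k : ℕ) (hn : Odd n) (hn3 : 3 ≤ n)
    (hk1 : 1 ≤ k) (hk2 : k ≤ (n - 1) / 2)
    (r : ℝ) (hr : |r| < ((n : ℝ) + 3) / 2)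
    (hr1 : 2 * r ≠ (n : ℝ) - 2 * k + 1) (hr2 : 2 * r ≠ -((n : ℝ) - 2 * k + 1))
    (f g : ℕ → ℝ) (hg0 : g 0 = 1)
    (hgrec : ∀ j : ℕ, g (j + 1) * ((n : ℝ) / 2 + 1 + j + 1 / 2 - r) =
      ((n : ℝ) / 2 + 1 + j + 1 / 2 + r) * g j)
    (hfrec : ∀ j : ℕ, f (j + 1) * ((n : ℝ) / 2 + 1 + j + 1 / 2 - r) =
      ((n : ℝ) / 2 + 1 + j + 1 / 2 + r) * f j)
    (hgf : ∀ j : ℕ, g j * ((n : ℝ) / 2 - k + 1 / 2 - r) =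
      ((n : ℝ) / 2 - k + 1 / 2 + r) * f j) :
    ∀ j : ℕ, g j = Zspec1 n 1 r j ∧ f j = Zspec0 n k 1 r j := by
  have habs := abs_lt.mp hr
  have hap : (0:ℝ) < (n:ℝ)/2 + 3/2 + r := by nlinarith [habs.1]
  have ham : (0:ℝ) < (n:ℝ)/2 + 3/2 - r := by nlinarith [habs.2]
  have hGap : 0 < Real.Gamma ((n:ℝ)/2 + 3/2 + r) := Real.Gamma_pos_of_pos hap
  have hGam : 0 < Real.Gamma ((n:ℝ)/2 + 3/2 - r) := Real.Gamma_pos_of_pos ham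
  have hBp : ∀ j : ℕ, (0:ℝ) < (n:ℝ)/2 + 1 + j + 1/2 + r := by
    intro j
    have : (0:ℝ) ≤ (j:ℝ) := Nat.cast_nonneg j
    nlinarith [habs.1]
  have hBm : ∀ j : ℕ, (0:ℝ) < (n:ℝ)/2 + 1 + j + 1/2 - r := by
    intro j
    have : (0:ℝ) ≤ (j:ℝ) := Nat.cast_nonneg j
    nlinarith [habs.2]
  have hG : ∀ j : ℕ, g j = Zspec1 n 1 r j := by
    intro j
    induction j with
    | zero =>
      rw [hg0]
      unfold Zspec1
      have e1 : (n:ℝ)/2 + 1 + (0:ℕ) + 1/2 + r = (n:ℝ)/2 + 3/2 + r := by push_cast; ring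
      have e2 : (n:ℝ)/2 + 1 + (0:ℕ) + 1/2 - r = (n:ℝ)/2 + 3/2 - r := by push_cast; ring
      rw [e1, e2, one_mul,
        mul_comm (Real.Gamma ((n:ℝ)/2 + 3/2 - r)) (Real.Gamma ((n:ℝ)/2 + 3/2 + r)),
        div_self (by positivity)]
    | succ j ih =>
      have hrec := hgrec j
      rw [ih] at hrec
      have hBm' := hBm j
      have hBp' := hBp j
      have hGBp : 0 < Real.Gamma ((n:ℝ)/2 + 1 + j + 1/2 + r) := Real.Gamma_pos_of_pos hBp'
      have hGBm : 0 < Real.Gamma ((n:ℝ)/2 + 1 + j + 1/2 - r) := Real.Gamma_pos_of_pos hBm'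
      have key : Zspec1 n 1 r (j+1) * ((n:ℝ)/2 + 1 + j + 1/2 - r) =
          ((n:ℝ)/2 + 1 + j + 1/2 + r) * Zspec1 n 1 r j := by
        unfold Zspec1
        have e1 : (n:ℝ)/2 + 1 + ((j:ℕ)+1:ℕ) + 1/2 + r = ((n:ℝ)/2 + 1 + j + 1/2 + r) + 1 := by
          push_cast; ring
        have e2 : (n:ℝ)/2 + 1 + ((j:ℕ)+1:ℕ) + 1/2 - r = ((n:ℝ)/2 + 1 + j + 1/2 - r) + 1 := by
          push_cast; ring
        rw [e1, e2, Real.Gamma_add_one (ne_of_gt hBp'), Real.Gamma_add_one (ne_of_gt hBm')]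
        set GP := Real.Gamma ((n:ℝ)/2 + 1 + j + 1/2 + r) with hGP
        set GM := Real.Gamma ((n:ℝ)/2 + 1 + j + 1/2 - r) with hGM
        set GA := Real.Gamma ((n:ℝ)/2 + 3/2 + r) with hGA
        set GB := Real.Gamma ((n:ℝ)/2 + 3/2 - r) with hGB
        set B := (n:ℝ)/2 + 1 + (j:ℝ) + 1/2 with hB
        have h1 : GM ≠ 0 := ne_of_gt hGBm
        have h2 : GA ≠ 0 := ne_of_gt hGap
        have h3 : B - r ≠ 0 := ne_of_gt hBm'
        field_simp
      exact mul_right_cancel₀ (ne_of_gt hBm') (hrec.trans key.symm)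
  intro j
  refine ⟨hG j, ?_⟩
  have hC : (n:ℝ)/2 - k + 1/2 + r ≠ 0 := by
    intro h
    apply hr2
    linarith
  have hD : (n:ℝ) - 2*k + 1 + 2*r ≠ 0 := by
    intro h
    apply hr2
    linarith
  have hfg := hgf j
  rw [hG j] at hfg
  have hthis : f j = (((n:ℝ)/2 - k + 1/2 - r) / ((n:ℝ)/2 - k + 1/2 + r)) * Zspec1 n 1 r j := by
    rw [div_mul_eq_mul_div, eq_div_iff hC]
    linarith [hfg]
  rw [hthis]
  unfold Zspec0
  congr 1
  rw [div_eq_div_iff hC hD]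
  ring
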